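/- Let F be a field with char F ≠ 2 and let V be an infinite-dimensional vector space over F. Then every derivation of the Lie algebra End_F(V)⁽⁻⁾ (End_F(V) with bracket [f,g] = f∘g − g∘f) is inner: for every Lie algebra derivation d there exists y ∈ End_F(V) such that d(a) = y∘a − a∘y for all a ∈ End_F(V). -/

import Mathlib

attribute [local instance 100] LieRing.ofAssociativeRing

open Finsupp in
private theorem exists_commutator_aux (F M : Type*) [Field F] [AddCommGroup M] [Module F M]
    (a : Module.End F (ℕ →₀ M)) :
    ∃ b S : Module.End F (ℕ →₀ M), a = b * S - S * b := by
  classical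
  set S : Module.End F (ℕ →₀ M) := Finsupp.lmapDomain M F Nat.succ with hS
  set B : ℕ → (M →ₗ[F] (ℕ →₀ M)) := fun n =>
    Nat.rec 0 (fun k Bk => a ∘ₗ Finsupp.lsingle k + S ∘ₗ Bk) n with hB
  refine ⟨Finsupp.lsum F B, S, ?_⟩
  apply Finsupp.lhom_ext
  intro n m
  have hSsingle : ∀ (k : ℕ) (x : M), S (Finsupp.single k x) = Finsupp.single (k+1) x := by
    intro k x
    simp [hS, Finsupp.lmapDomain_apply, Finsupp.mapDomain_single]
  have hbs : ∀ (k : ℕ) (x : M), (Finsupp.lsum F B) (Finsupp.single k x) = B k x := by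
    intro k x; simp
  simp only [LinearMap.sub_apply, Module.End.mul_apply, hSsingle, hbs]
  have : B (n+1) m = a (Finsupp.single n m) + S (B n m) := rfl
  rw [this]
  abel

/-- Corner version: if `P = g ∘ h` with `h ∘ g = 1` (so the corner `P*A*P` is conjugate to
`End (ℕ →₀ M)`), then every element of the corner is a commutator of corner elements. -/
private theorem corner_commutator (F M W : Type*) [Field F] [AddCommGroup M] [Module F M]
    [AddCommGroup W] [Module F W]
    (g : (ℕ →₀ M) →ₗ[F] W) (h : W →ₗ[F] (ℕ →₀ M)) (hhg : h ∘ₗ g = LinearMap.id)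
    (x : Module.End F W) (hx : x = (g ∘ₗ h) * x * ((g ∘ₗ h) : Module.End F W)) :
    ∃ b c : Module.End F W,
      (g ∘ₗ h : Module.End F W) * b = b ∧ b * (g ∘ₗ h) = b ∧
      (g ∘ₗ h : Module.End F W) * c = c ∧ c * (g ∘ₗ h) = c ∧ x = b * c - c * b := by
  obtain ⟨b0, S0, hb0⟩ := exists_commutator_aux F M (h ∘ₗ x ∘ₗ g)
  have key : ∀ y z : Module.End F (ℕ →₀ M),
      (g ∘ₗ y ∘ₗ h : Module.End F W) * (g ∘ₗ z ∘ₗ h) = g ∘ₗ (y * z) ∘ₗ h := by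
    intro y z
    have : (g ∘ₗ y ∘ₗ h : Module.End F W) * (g ∘ₗ z ∘ₗ h)
        = g ∘ₗ y ∘ₗ ((h ∘ₗ g) ∘ₗ z ∘ₗ h) := by
      simp only [Module.End.mul_eq_comp, LinearMap.comp_assoc]
    rw [this, hhg]
    simp only [Module.End.mul_eq_comp, LinearMap.id_comp, LinearMap.comp_assoc]
  have hP : ∀ y : Module.End F (ℕ →₀ M),
      ((g ∘ₗ h : Module.End F W)) * (g ∘ₗ y ∘ₗ h) = g ∘ₗ y ∘ₗ h ∧
      (g ∘ₗ y ∘ₗ h : Module.End F W) * (g ∘ₗ h) = g ∘ₗ y ∘ₗ h := by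
    intro y
    constructor
    · have : ((g ∘ₗ h : Module.End F W)) * (g ∘ₗ y ∘ₗ h) = g ∘ₗ ((h ∘ₗ g) ∘ₗ y ∘ₗ h) := by
        simp only [Module.End.mul_eq_comp, LinearMap.comp_assoc]
      rw [this, hhg, LinearMap.id_comp]
    · have : (g ∘ₗ y ∘ₗ h : Module.End F W) * (g ∘ₗ h) = g ∘ₗ y ∘ₗ ((h ∘ₗ g) ∘ₗ h) := by
        simp only [Module.End.mul_eq_comp, LinearMap.comp_assoc]
      rw [this, hhg, LinearMap.id_comp]
  refine ⟨g ∘ₗ b0 ∘ₗ h, g ∘ₗ S0 ∘ₗ h, (hP b0).1, (hP b0).2, (hP S0).1, (hP S0).2, ?_⟩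
  rw [key, key]
  have : (g ∘ₗ (b0 * S0) ∘ₗ h : Module.End F W) - g ∘ₗ (S0 * b0) ∘ₗ h
      = g ∘ₗ (b0 * S0 - S0 * b0) ∘ₗ h := by
    ext w; simp
  rw [this, ← hb0]
  have : (g ∘ₗ (h ∘ₗ x ∘ₗ g) ∘ₗ h : Module.End F W) = (g ∘ₗ h) * x * (g ∘ₗ h) := by
    simp only [Module.End.mul_eq_comp, LinearMap.comp_assoc]
  rw [this, ← hx]

private theorem deriv_inner (F W : Type*) [Field F] [AddCommGroup W] [Module F W]
    (w0 : W) (φ : W →ₗ[F] F) (hφ : φ w0 = 1)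
    (D : Module.End F W →ₗ[F] Module.End F W)
    (hD : ∀ a b : Module.End F W, D (a * b) = D a * b + a * D b) :
    ∃ y : Module.End F W, ∀ a : Module.End F W, D a = y * a - a * y := by
  have hr : ∀ (a : Module.End F W) (v : W),
      a * (φ.smulRight v) = φ.smulRight (a v) := by
    intro a v
    ext u
    simp [Module.End.mul_apply, LinearMap.smulRight_apply, map_smul]
  set y : Module.End F W :=
    { toFun := fun v => D (φ.smulRight v) w0
      map_add' := by
        intro v w
        have : φ.smulRight (v + w) = φ.smulRight v + φ.smulRight w := by
          ext u; simp [LinearMap.smulRight_apply, smul_add]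
        simp [this]
      map_smul' := by
        intro c v
        have h2 : φ.smulRight (c • v) = c • φ.smulRight v := by
          ext u
          simp only [LinearMap.smulRight_apply, LinearMap.smul_apply]
          rw [smul_comm]
        simp only [h2, map_smul, LinearMap.smul_apply, RingHom.id_apply] } with hy
  have hyapp : ∀ v, y v = D (φ.smulRight v) w0 := fun v => rfl
  refine ⟨y, fun a => ?_⟩
  ext v
  have h1 : y (a v) = D a v + a (y v) := by
    rw [hyapp, ← hr a v, hD]
    simp only [LinearMap.add_apply, Module.End.mul_apply, LinearMap.smulRight_apply, hφ,
      one_smul, hyapp]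
  simp only [LinearMap.sub_apply, Module.End.mul_apply, h1]
  abel

open Finsupp in
private theorem units_setup (F M : Type*) [Field F] [AddCommGroup M] [Module F M] :
    ∃ (gl gr : (ℕ →₀ M) →ₗ[F] ((ℕ ⊕ ℕ) →₀ M)) (hl hr : ((ℕ ⊕ ℕ) →₀ M) →ₗ[F] (ℕ →₀ M)),
      hl ∘ₗ gl = LinearMap.id ∧ hr ∘ₗ gr = LinearMap.id ∧
      hl ∘ₗ gr = 0 ∧ hr ∘ₗ gl = 0 ∧
      ((gl ∘ₗ hl : Module.End F ((ℕ ⊕ ℕ) →₀ M)) + (gr ∘ₗ hr)) = 1 := by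
  classical
  refine ⟨Finsupp.lmapDomain M F Sum.inl, Finsupp.lmapDomain M F Sum.inr,
    Finsupp.lsum F (Sum.elim (fun n => Finsupp.lsingle n) (fun _ => 0)),
    Finsupp.lsum F (Sum.elim (fun _ => 0) (fun n => Finsupp.lsingle n)),
    ?_, ?_, ?_, ?_, ?_⟩
  · apply Finsupp.lhom_ext; intro n m
    simp [Finsupp.lmapDomain_apply, Finsupp.mapDomain_single]
  · apply Finsupp.lhom_ext; intro n m
    simp [Finsupp.lmapDomain_apply, Finsupp.mapDomain_single]
  · apply Finsupp.lhom_ext; intro n m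
    simp [Finsupp.lmapDomain_apply, Finsupp.mapDomain_single]
    rw [Finsupp.sum_single_index] <;> simp
  · apply Finsupp.lhom_ext; intro n m
    simp [Finsupp.lmapDomain_apply, Finsupp.mapDomain_single]
    rw [Finsupp.sum_single_index] <;> simp
  · apply Finsupp.lhom_ext; intro k m
    cases k <;>
      simp [Finsupp.lmapDomain_apply, Finsupp.mapDomain_single, LinearMap.add_apply]
    all_goals (rw [Finsupp.sum_single_index] <;> simp)

set_option maxHeartbeats 3000000 in
private theorem lie_to_assoc {F A : Type*} [Field F] [Ring A] [Algebra F A]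
    (htwo : ∀ x : A, x + x = 0 → x = 0)
    (p q u v : A)
    (hpq : p + q = 1) (hp : p*p = p) (huv : u*v = p) (hvu : v*u = q)
    (hpu : p*u = u) (huq : u*q = u) (hqv : q*v = v) (hvp : v*p = v)
    (hSCp : ∀ x : A, p*x = x → x*p = x →
      ∃ b c : A, p*b = b ∧ b*p = b ∧ p*c = c ∧ c*p = c ∧ x = b*c - c*b)
    (hSCq : ∀ x : A, q*x = x → x*q = x →
      ∃ b c : A, q*b = b ∧ b*q = b ∧ q*c = c ∧ c*q = c ∧ x = b*c - c*b)
    (d : A →ₗ[F] A)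
    (hd : ∀ a b : A, d (a*b - b*a) = d a * b - b * d a + (a * d b - d b * a)) :
    ∃ t : A, ∀ a b : A, d (a*b) - (t*(a*b) - (a*b)*t)
      = (d a - (t*a - a*t)) * b + a * (d b - (t*b - b*t)) := by
  have W1 : ∀ (x y z : A), x*y = z → ∀ w, x*(y*w) = z*w := fun x y z h w => by
    rw [← mul_assoc, h]
  have hqeq : q = 1 - p := by rw [← hpq]; abel
  have hqq : q*q = q := by
    have h1 : (1-p)*(1-p) = 1 - p - p + p*p := by noncomm_ring
    rw [hqeq, h1, hp]; abel
  have hpq0 : p*q = 0 := by rw [hqeq, mul_sub, mul_one, hp, sub_self]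
  have hqp0 : q*p = 0 := by rw [hqeq, sub_mul, one_mul, hp, sub_self]
  have huu : u*u = 0 := by
    have h1 : u * u = (u*q) * (p*u) := by rw [huq, hpu]
    rw [h1, mul_assoc, ← mul_assoc q p, hqp0, zero_mul, mul_zero]
  have hvv : v*v = 0 := by
    have h1 : v * v = (v*p) * (q*v) := by rw [hvp, hqv]
    rw [h1, mul_assoc, ← mul_assoc p q, hpq0, zero_mul, mul_zero]
  have hup : u*p = 0 := by rw [← huv, ← mul_assoc, huu, zero_mul]
  have hqu : q*u = 0 := by rw [← hvu, mul_assoc, huu, mul_zero]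
  have hvq : v*q = 0 := by rw [← hvu, ← mul_assoc, hvv, zero_mul]
  have hpv : p*v = 0 := by rw [← huv, mul_assoc, hvv, mul_zero]
  have hPeirce : ∀ z : A, z = p*(z*p) + p*(z*q) + (q*(z*p) + q*(z*q)) := by
    intro z
    have h0 : (p+q)*(z*(p+q)) = p*(z*p) + p*(z*q) + (q*(z*p) + q*(z*q)) := by
      simp only [mul_assoc, mul_add, add_mul, mul_sub, sub_mul, mul_one, one_mul, mul_zero, zero_mul, sub_zero, zero_sub, add_zero, zero_add, sub_self, neg_zero, neg_neg, mul_neg, neg_mul, W1 _ _ _ hp, W1 _ _ _ hqq, W1 _ _ _ hpq0, W1 _ _ _ hqp0, W1 _ _ _ hpu, W1 _ _ _ huq, W1 _ _ _ hqv, W1 _ _ _ hvp, W1 _ _ _ hup, W1 _ _ _ hqu, W1 _ _ _ hvq, W1 _ _ _ hpv, W1 _ _ _ huu, W1 _ _ _ hvv, W1 _ _ _ huv, W1 _ _ _ hvu, hp, hqq, hpq0, hqp0, hpu, huq, hqv, hvp, hup, hqu, hvq, hpv, huu, hvv, huv, hvu]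
      abel
    rw [hpq, mul_one, one_mul] at h0
    exact h0
  set s : A := d p with hsdef
  set t : A := q*(s*p) - p*(s*q) with htdef
  set D : A → A := fun z => d z - (t*z - z*t) with hDdef
  have hDz : ∀ z, D z = d z - (t*z - z*t) := fun z => rfl
  have hd1 : ∀ a b : A, D (a*b - b*a) = D a * b - b * D a + (a * D b - D b * a) := by
    intro a b
    simp only [hDdef]
    rw [hd a b]
    noncomm_ring
  have hD0 : D 0 = 0 := by simp only [hDdef]; simp
  have hDadd : ∀ x y, D (x + y) = D x + D y := by
    intro x y; simp only [hDdef]; rw [map_add]; noncomm_ring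
  have hDsub : ∀ x y, D (x - y) = D x - D y := by
    intro x y; simp only [hDdef]; rw [map_sub]; noncomm_ring
  have hDp : D p = p*(s*p) + q*(s*q) := by
    rw [hDz]
    have h2 : t*p - p*t = q*(s*p) + p*(s*q) := by
      rw [htdef]; simp only [mul_assoc, mul_add, add_mul, mul_sub, sub_mul, mul_one, one_mul, mul_zero, zero_mul, sub_zero, zero_sub, add_zero, zero_add, sub_self, neg_zero, neg_neg, mul_neg, neg_mul, W1 _ _ _ hp, W1 _ _ _ hqq, W1 _ _ _ hpq0, W1 _ _ _ hqp0, W1 _ _ _ hpu, W1 _ _ _ huq, W1 _ _ _ hqv, W1 _ _ _ hvp, W1 _ _ _ hup, W1 _ _ _ hqu, W1 _ _ _ hvq, W1 _ _ _ hpv, W1 _ _ _ huu, W1 _ _ _ hvv, W1 _ _ _ huv, W1 _ _ _ hvu, hp, hqq, hpq0, hqp0, hpu, huq, hqv, hvp, hup, hqu, hvq, hpv, huu, hvv, huv, hvu]; abel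
    rw [h2]
    have hs1 := hPeirce s
    rw [show d p = s from rfl]
    conv_lhs => rw [hs1]
    simp only [mul_assoc, mul_add, add_mul, mul_sub, sub_mul, mul_one, one_mul, mul_zero, zero_mul, sub_zero, zero_sub, add_zero, zero_add, sub_self, neg_zero, neg_neg, mul_neg, neg_mul, W1 _ _ _ hp, W1 _ _ _ hqq, W1 _ _ _ hpq0, W1 _ _ _ hqp0, W1 _ _ _ hpu, W1 _ _ _ huq, W1 _ _ _ hqv, W1 _ _ _ hvp, W1 _ _ _ hup, W1 _ _ _ hqu, W1 _ _ _ hvq, W1 _ _ _ hpv, W1 _ _ _ huu, W1 _ _ _ hvv, W1 _ _ _ huv, W1 _ _ _ hvu, hp, hqq, hpq0, hqp0, hpu, huq, hqv, hvp, hup, hqu, hvq, hpv, huu, hvv, huv, hvu]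
    abel
  have h12 : ∀ a : A, p*a = a → a*q = a → p*(D a) = D a ∧ (D a)*q = D a := by
    intro a ha1 ha2
    have ha3 : a*p = 0 := by rw [← ha2, mul_assoc, hqp0, mul_zero]
    have ha4 : q*a = 0 := by rw [← ha1, ← mul_assoc, hqp0, zero_mul]
    set x : A := D a with hxdef
    have hbr : p*a - a*p = a := by rw [ha1, ha3, sub_zero]
    have eq1 : x = (p*(s*p) + q*(s*q)) * a - a * (p*(s*p) + q*(s*q)) + (p*x - x*p) := by
      have h0 := hd1 p a
      rw [hbr, hDp] at h0
      exact h0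
    have e_qp : q*(x*p) = 0 := by
      apply htwo
      have h1 : q*(x*p) = -(q*(x*p)) := by
        conv_lhs => rw [eq1]
        simp only [mul_assoc, mul_add, add_mul, mul_sub, sub_mul, mul_one, one_mul, mul_zero, zero_mul, sub_zero, zero_sub, add_zero, zero_add, sub_self, neg_zero, neg_neg, mul_neg, neg_mul, W1 _ _ _ hp, W1 _ _ _ hqq, W1 _ _ _ hpq0, W1 _ _ _ hqp0, W1 _ _ _ hpu, W1 _ _ _ huq, W1 _ _ _ hqv, W1 _ _ _ hvp, W1 _ _ _ hup, W1 _ _ _ hqu, W1 _ _ _ hvq, W1 _ _ _ hpv, W1 _ _ _ huu, W1 _ _ _ hvv, W1 _ _ _ huv, W1 _ _ _ hvu, hp, hqq, hpq0, hqp0, hpu, huq, hqv, hvp, hup, hqu, hvq, hpv, huu, hvv, huv, hvu, ha1, ha2, ha3, ha4, W1 _ _ _ ha1, W1 _ _ _ ha2, W1 _ _ _ ha3,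
          W1 _ _ _ ha4]
      exact eq_neg_iff_add_eq_zero.mp h1
    have e_pp : p*(x*p) = 0 := by
      conv_lhs => rw [eq1]
      simp only [mul_assoc, mul_add, add_mul, mul_sub, sub_mul, mul_one, one_mul, mul_zero, zero_mul, sub_zero, zero_sub, add_zero, zero_add, sub_self, neg_zero, neg_neg, mul_neg, neg_mul, W1 _ _ _ hp, W1 _ _ _ hqq, W1 _ _ _ hpq0, W1 _ _ _ hqp0, W1 _ _ _ hpu, W1 _ _ _ huq, W1 _ _ _ hqv, W1 _ _ _ hvp, W1 _ _ _ hup, W1 _ _ _ hqu, W1 _ _ _ hvq, W1 _ _ _ hpv, W1 _ _ _ huu, W1 _ _ _ hvv, W1 _ _ _ huv, W1 _ _ _ hvu, hp, hqq, hpq0, hqp0, hpu, huq, hqv, hvp, hup, hqu, hvq, hpv, huu, hvv, huv, hvu, ha1, ha2, ha3, ha4, W1 _ _ _ ha1, W1 _ _ _ ha2, W1 _ _ _ ha3,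
        W1 _ _ _ ha4]
    have e_qq : q*(x*q) = 0 := by
      conv_lhs => rw [eq1]
      simp only [mul_assoc, mul_add, add_mul, mul_sub, sub_mul, mul_one, one_mul, mul_zero, zero_mul, sub_zero, zero_sub, add_zero, zero_add, sub_self, neg_zero, neg_neg, mul_neg, neg_mul, W1 _ _ _ hp, W1 _ _ _ hqq, W1 _ _ _ hpq0, W1 _ _ _ hqp0, W1 _ _ _ hpu, W1 _ _ _ huq, W1 _ _ _ hqv, W1 _ _ _ hvp, W1 _ _ _ hup, W1 _ _ _ hqu, W1 _ _ _ hvq, W1 _ _ _ hpv, W1 _ _ _ huu, W1 _ _ _ hvv, W1 _ _ _ huv, W1 _ _ _ hvu, hp, hqq, hpq0, hqp0, hpu, huq, hqv, hvp, hup, hqu, hvq, hpv, huu, hvv, huv, hvu, ha1, ha2, ha3, ha4, W1 _ _ _ ha1, W1 _ _ _ ha2, W1 _ _ _ ha3,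
        W1 _ _ _ ha4]
    have e4 : x*p = 0 := by
      have h1 : p*(x*p) + q*(x*p) = x*p := by rw [← add_mul, hpq, one_mul]
      rw [e_pp, e_qp] at h1; rw [← h1]; simp
    have e5 : q*x = 0 := by
      have h1 : q*(x*p) + q*(x*q) = q*x := by rw [← mul_add, ← mul_add, hpq, mul_one]
      rw [e_qp, e_qq] at h1; rw [← h1]; simp
    constructor
    · have h1 : p*x + q*x = x := by rw [← add_mul, hpq, one_mul]
      rw [e5, add_zero] at h1; exact h1
    · have h1 : x*p + x*q = x := by rw [← mul_add, hpq, mul_one]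
      rw [e4, zero_add] at h1; exact h1
  have h21 : ∀ a : A, q*a = a → a*p = a → q*(D a) = D a ∧ (D a)*p = D a := by
    intro a ha1 ha2
    have ha3 : a*q = 0 := by rw [← ha2, mul_assoc, hpq0, mul_zero]
    have ha4 : p*a = 0 := by rw [← ha1, ← mul_assoc, hpq0, zero_mul]
    set x : A := D a with hxdef
    have hbr : a*p - p*a = a := by rw [ha2, ha4, sub_zero]
    have eq2 : x = x*p - p*x + (a * (p*(s*p) + q*(s*q)) - (p*(s*p) + q*(s*q)) * a) := by
      have h0 := hd1 a p
      rw [hbr, hDp] at h0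
      exact h0
    have e_pq : p*(x*q) = 0 := by
      apply htwo
      have h1 : p*(x*q) = -(p*(x*q)) := by
        conv_lhs => rw [eq2]
        simp only [mul_assoc, mul_add, add_mul, mul_sub, sub_mul, mul_one, one_mul, mul_zero, zero_mul, sub_zero, zero_sub, add_zero, zero_add, sub_self, neg_zero, neg_neg, mul_neg, neg_mul, W1 _ _ _ hp, W1 _ _ _ hqq, W1 _ _ _ hpq0, W1 _ _ _ hqp0, W1 _ _ _ hpu, W1 _ _ _ huq, W1 _ _ _ hqv, W1 _ _ _ hvp, W1 _ _ _ hup, W1 _ _ _ hqu, W1 _ _ _ hvq, W1 _ _ _ hpv, W1 _ _ _ huu, W1 _ _ _ hvv, W1 _ _ _ huv, W1 _ _ _ hvu, hp, hqq, hpq0, hqp0, hpu, huq, hqv, hvp, hup, hqu, hvq, hpv, huu, hvv, huv, hvu, ha1, ha2, ha3, ha4, W1 _ _ _ ha1, W1 _ _ _ ha2, W1 _ _ _ ha3,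
          W1 _ _ _ ha4]
      exact eq_neg_iff_add_eq_zero.mp h1
    have e_qq : q*(x*q) = 0 := by
      conv_lhs => rw [eq2]
      simp only [mul_assoc, mul_add, add_mul, mul_sub, sub_mul, mul_one, one_mul, mul_zero, zero_mul, sub_zero, zero_sub, add_zero, zero_add, sub_self, neg_zero, neg_neg, mul_neg, neg_mul, W1 _ _ _ hp, W1 _ _ _ hqq, W1 _ _ _ hpq0, W1 _ _ _ hqp0, W1 _ _ _ hpu, W1 _ _ _ huq, W1 _ _ _ hqv, W1 _ _ _ hvp, W1 _ _ _ hup, W1 _ _ _ hqu, W1 _ _ _ hvq, W1 _ _ _ hpv, W1 _ _ _ huu, W1 _ _ _ hvv, W1 _ _ _ huv, W1 _ _ _ hvu, hp, hqq, hpq0, hqp0, hpu, huq, hqv, hvp, hup, hqu, hvq, hpv, huu, hvv, huv, hvu, ha1, ha2, ha3, ha4, W1 _ _ _ ha1, W1 _ _ _ ha2, W1 _ _ _ ha3,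
        W1 _ _ _ ha4]
    have e_pp : p*(x*p) = 0 := by
      conv_lhs => rw [eq2]
      simp only [mul_assoc, mul_add, add_mul, mul_sub, sub_mul, mul_one, one_mul, mul_zero, zero_mul, sub_zero, zero_sub, add_zero, zero_add, sub_self, neg_zero, neg_neg, mul_neg, neg_mul, W1 _ _ _ hp, W1 _ _ _ hqq, W1 _ _ _ hpq0, W1 _ _ _ hqp0, W1 _ _ _ hpu, W1 _ _ _ huq, W1 _ _ _ hqv, W1 _ _ _ hvp, W1 _ _ _ hup, W1 _ _ _ hqu, W1 _ _ _ hvq, W1 _ _ _ hpv, W1 _ _ _ huu, W1 _ _ _ hvv, W1 _ _ _ huv, W1 _ _ _ hvu, hp, hqq, hpq0, hqp0, hpu, huq, hqv, hvp, hup, hqu, hvq, hpv, huu, hvv, huv, hvu, ha1, ha2, ha3, ha4, W1 _ _ _ ha1, W1 _ _ _ ha2, W1 _ _ _ ha3,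
        W1 _ _ _ ha4]
    have e4 : x*q = 0 := by
      have h1 : p*(x*q) + q*(x*q) = x*q := by rw [← add_mul, hpq, one_mul]
      rw [e_pq, e_qq] at h1; rw [← h1]; simp
    have e5 : p*x = 0 := by
      have h1 : p*(x*p) + p*(x*q) = p*x := by rw [← mul_add, ← mul_add, hpq, mul_one]
      rw [e_pp, e_pq] at h1; rw [← h1]; simp
    constructor
    · have h1 : p*x + q*x = x := by rw [← add_mul, hpq, one_mul]
      rw [e5, zero_add] at h1; exact h1
    · have h1 : x*p + x*q = x := by rw [← mul_add, hpq, mul_one]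
      rw [e4, add_zero] at h1; exact h1
  have hcross11 : ∀ a : A, p*a = a → a*p = a → p*((D a)*q) = 0 ∧ q*((D a)*p) = 0 := by
    intro a ha1 ha2
    have ha3 : a*q = 0 := by rw [← ha2, mul_assoc, hpq0, mul_zero]
    have ha4 : q*a = 0 := by rw [← ha1, ← mul_assoc, hqp0, zero_mul]
    set x : A := D a with hxdef
    have hbr : p*a - a*p = 0 := by rw [ha1, ha2, sub_self]
    have eq3 : (0:A) = (p*(s*p) + q*(s*q)) * a - a * (p*(s*p) + q*(s*q)) + (p*x - x*p) := by
      have h0 := hd1 p a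
      rw [hbr, hD0, hDp] at h0
      exact h0
    constructor
    · have h1 : p*((0:A)*q) = p*(x*q) := by
        conv_lhs => rw [eq3]
        simp only [mul_assoc, mul_add, add_mul, mul_sub, sub_mul, mul_one, one_mul, mul_zero, zero_mul, sub_zero, zero_sub, add_zero, zero_add, sub_self, neg_zero, neg_neg, mul_neg, neg_mul, W1 _ _ _ hp, W1 _ _ _ hqq, W1 _ _ _ hpq0, W1 _ _ _ hqp0, W1 _ _ _ hpu, W1 _ _ _ huq, W1 _ _ _ hqv, W1 _ _ _ hvp, W1 _ _ _ hup, W1 _ _ _ hqu, W1 _ _ _ hvq, W1 _ _ _ hpv, W1 _ _ _ huu, W1 _ _ _ hvv, W1 _ _ _ huv, W1 _ _ _ hvu, hp, hqq, hpq0, hqp0, hpu, huq, hqv, hvp, hup, hqu, hvq, hpv, huu, hvv, huv, hvu, ha1, ha2, ha3, ha4, W1 _ _ _ ha1, W1 _ _ _ ha2, W1 _ _ _ ha3,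
          W1 _ _ _ ha4]
      rw [zero_mul, mul_zero] at h1; exact h1.symm
    · have h1 : q*((0:A)*p) = -(q*(x*p)) := by
        conv_lhs => rw [eq3]
        simp only [mul_assoc, mul_add, add_mul, mul_sub, sub_mul, mul_one, one_mul, mul_zero, zero_mul, sub_zero, zero_sub, add_zero, zero_add, sub_self, neg_zero, neg_neg, mul_neg, neg_mul, W1 _ _ _ hp, W1 _ _ _ hqq, W1 _ _ _ hpq0, W1 _ _ _ hqp0, W1 _ _ _ hpu, W1 _ _ _ huq, W1 _ _ _ hqv, W1 _ _ _ hvp, W1 _ _ _ hup, W1 _ _ _ hqu, W1 _ _ _ hvq, W1 _ _ _ hpv, W1 _ _ _ huu, W1 _ _ _ hvv, W1 _ _ _ huv, W1 _ _ _ hvu, hp, hqq, hpq0, hqp0, hpu, huq, hqv, hvp, hup, hqu, hvq, hpv, huu, hvv, huv, hvu, ha1, ha2, ha3, ha4, W1 _ _ _ ha1, W1 _ _ _ ha2, W1 _ _ _ ha3,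
          W1 _ _ _ ha4]
      rw [zero_mul, mul_zero] at h1
      have h2 := h1.symm
      rw [neg_eq_zero] at h2; exact h2
  have hcross22 : ∀ a : A, q*a = a → a*q = a → p*((D a)*q) = 0 ∧ q*((D a)*p) = 0 := by
    intro a ha1 ha2
    have ha3 : a*p = 0 := by rw [← ha2, mul_assoc, hqp0, mul_zero]
    have ha4 : p*a = 0 := by rw [← ha1, ← mul_assoc, hpq0, zero_mul]
    set x : A := D a with hxdef
    have hbr : p*a - a*p = 0 := by rw [ha3, ha4, sub_self]
    have eq3 : (0:A) = (p*(s*p) + q*(s*q)) * a - a * (p*(s*p) + q*(s*q)) + (p*x - x*p) := by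
      have h0 := hd1 p a
      rw [hbr, hD0, hDp] at h0
      exact h0
    constructor
    · have h1 : p*((0:A)*q) = p*(x*q) := by
        conv_lhs => rw [eq3]
        simp only [mul_assoc, mul_add, add_mul, mul_sub, sub_mul, mul_one, one_mul, mul_zero, zero_mul, sub_zero, zero_sub, add_zero, zero_add, sub_self, neg_zero, neg_neg, mul_neg, neg_mul, W1 _ _ _ hp, W1 _ _ _ hqq, W1 _ _ _ hpq0, W1 _ _ _ hqp0, W1 _ _ _ hpu, W1 _ _ _ huq, W1 _ _ _ hqv, W1 _ _ _ hvp, W1 _ _ _ hup, W1 _ _ _ hqu, W1 _ _ _ hvq, W1 _ _ _ hpv, W1 _ _ _ huu, W1 _ _ _ hvv, W1 _ _ _ huv, W1 _ _ _ hvu, hp, hqq, hpq0, hqp0, hpu, huq, hqv, hvp, hup, hqu, hvq, hpv, huu, hvv, huv, hvu, ha1, ha2, ha3, ha4, W1 _ _ _ ha1, W1 _ _ _ ha2, W1 _ _ _ ha3,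
          W1 _ _ _ ha4]
      rw [zero_mul, mul_zero] at h1; exact h1.symm
    · have h1 : q*((0:A)*p) = -(q*(x*p)) := by
        conv_lhs => rw [eq3]
        simp only [mul_assoc, mul_add, add_mul, mul_sub, sub_mul, mul_one, one_mul, mul_zero, zero_mul, sub_zero, zero_sub, add_zero, zero_add, sub_self, neg_zero, neg_neg, mul_neg, neg_mul, W1 _ _ _ hp, W1 _ _ _ hqq, W1 _ _ _ hpq0, W1 _ _ _ hqp0, W1 _ _ _ hpu, W1 _ _ _ huq, W1 _ _ _ hqv, W1 _ _ _ hvp, W1 _ _ _ hup, W1 _ _ _ hqu, W1 _ _ _ hvq, W1 _ _ _ hpv, W1 _ _ _ huu, W1 _ _ _ hvv, W1 _ _ _ huv, W1 _ _ _ hvu, hp, hqq, hpq0, hqp0, hpu, huq, hqv, hvp, hup, hqu, hvq, hpv, huu, hvv, huv, hvu, ha1, ha2, ha3, ha4, W1 _ _ _ ha1, W1 _ _ _ ha2, W1 _ _ _ ha3,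
          W1 _ _ _ ha4]
      rw [zero_mul, mul_zero] at h1
      have h2 := h1.symm
      rw [neg_eq_zero] at h2; exact h2
  have hker1 : ∀ b c : A, p*b = b → b*p = b → p*c = c → c*p = c →
      q*((D (b*c - c*b))*q) = 0 := by
    intro b c hb1 hb2 hc1 hc2
    have hb3 : b*q = 0 := by rw [← hb2, mul_assoc, hpq0, mul_zero]
    have hb4 : q*b = 0 := by rw [← hb1, ← mul_assoc, hqp0, zero_mul]
    have hc3 : c*q = 0 := by rw [← hc2, mul_assoc, hpq0, mul_zero]
    have hc4 : q*c = 0 := by rw [← hc1, ← mul_assoc, hqp0, zero_mul]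
    rw [hd1 b c]
    set y : A := D b
    set z : A := D c
    simp only [mul_assoc, mul_add, add_mul, mul_sub, sub_mul, mul_one, one_mul, mul_zero, zero_mul, sub_zero, zero_sub, add_zero, zero_add, sub_self, neg_zero, neg_neg, mul_neg, neg_mul, W1 _ _ _ hp, W1 _ _ _ hqq, W1 _ _ _ hpq0, W1 _ _ _ hqp0, W1 _ _ _ hpu, W1 _ _ _ huq, W1 _ _ _ hqv, W1 _ _ _ hvp, W1 _ _ _ hup, W1 _ _ _ hqu, W1 _ _ _ hvq, W1 _ _ _ hpv, W1 _ _ _ huu, W1 _ _ _ hvv, W1 _ _ _ huv, W1 _ _ _ hvu, hp, hqq, hpq0, hqp0, hpu, huq, hqv, hvp, hup, hqu, hvq, hpv, huu, hvv, huv, hvu, hb3, hb4, hc3, hc4, W1 _ _ _ hb3, W1 _ _ _ hb4, W1 _ _ _ hc3,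
      W1 _ _ _ hc4]
  have hker2 : ∀ b c : A, q*b = b → b*q = b → q*c = c → c*q = c →
      p*((D (b*c - c*b))*p) = 0 := by
    intro b c hb1 hb2 hc1 hc2
    have hb3 : b*p = 0 := by rw [← hb2, mul_assoc, hqp0, mul_zero]
    have hb4 : p*b = 0 := by rw [← hb1, ← mul_assoc, hpq0, zero_mul]
    have hc3 : c*p = 0 := by rw [← hc2, mul_assoc, hqp0, mul_zero]
    have hc4 : p*c = 0 := by rw [← hc1, ← mul_assoc, hpq0, zero_mul]
    rw [hd1 b c]
    set y : A := D b
    set z : A := D c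
    simp only [mul_assoc, mul_add, add_mul, mul_sub, sub_mul, mul_one, one_mul, mul_zero, zero_mul, sub_zero, zero_sub, add_zero, zero_add, sub_self, neg_zero, neg_neg, mul_neg, neg_mul, W1 _ _ _ hp, W1 _ _ _ hqq, W1 _ _ _ hpq0, W1 _ _ _ hqp0, W1 _ _ _ hpu, W1 _ _ _ huq, W1 _ _ _ hqv, W1 _ _ _ hvp, W1 _ _ _ hup, W1 _ _ _ hqu, W1 _ _ _ hvq, W1 _ _ _ hpv, W1 _ _ _ huu, W1 _ _ _ hvv, W1 _ _ _ huv, W1 _ _ _ hvu, hp, hqq, hpq0, hqp0, hpu, huq, hqv, hvp, hup, hqu, hvq, hpv, huu, hvv, huv, hvu, hb3, hb4, hc3, hc4, W1 _ _ _ hb3, W1 _ _ _ hb4, W1 _ _ _ hc3,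
      W1 _ _ _ hc4]
  have h5 : ∀ x : A, p*x = x → x*p = x → q*((D x)*q) = 0 := by
    intro x hx1 hx2
    obtain ⟨b, c, hb1, hb2, hc1, hc2, hbc⟩ := hSCp x hx1 hx2
    rw [hbc]; exact hker1 b c hb1 hb2 hc1 hc2
  have h5' : ∀ x : A, q*x = x → x*q = x → p*((D x)*p) = 0 := by
    intro x hx1 hx2
    obtain ⟨b, c, hb1, hb2, hc1, hc2, hbc⟩ := hSCq x hx1 hx2
    rw [hbc]; exact hker2 b c hb1 hb2 hc1 hc2
  have h11 : ∀ a : A, p*a = a → a*p = a → p*(D a) = D a ∧ (D a)*p = D a := by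
    intro a ha1 ha2
    obtain ⟨hc1, hc2⟩ := hcross11 a ha1 ha2
    have hc3 := h5 a ha1 ha2
    have hdec := hPeirce (D a)
    rw [hc1, hc2, hc3] at hdec
    simp only [zero_add, add_zero] at hdec
    constructor
    · rw [hdec, ← mul_assoc, hp]
    · rw [hdec, mul_assoc, mul_assoc, hp]
  have h22 : ∀ a : A, q*a = a → a*q = a → q*(D a) = D a ∧ (D a)*q = D a := by
    intro a ha1 ha2
    obtain ⟨hc1, hc2⟩ := hcross22 a ha1 ha2
    have hc3 := h5' a ha1 ha2
    have hdec := hPeirce (D a)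
    rw [hc1, hc2, hc3] at hdec
    simp only [zero_add, add_zero] at hdec
    constructor
    · rw [hdec, ← mul_assoc, hqq]
    · rw [hdec, mul_assoc, mul_assoc, hqq]
  have czero : ∀ x y e f : A, x*e = x → f*y = y → e*f = 0 → x*y = 0 := by
    intro x y e f hx hy hef
    rw [← hx, ← hy, mul_assoc, ← mul_assoc e f y, hef, zero_mul, mul_zero]
  have cadj : ∀ a b : A, b*a = 0 → b*(D a) = 0 → (D b)*a = 0 →
      D (a*b) = D a * b + a * D b := by
    intro a b h1 h2 h3
    have h0 := hd1 a b
    rw [h1, sub_zero] at h0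
    rw [h0, h2, h3]; abel
  have cA : ∀ g m : A, p*g = g → g*p = g → p*m = m → m*q = m →
      D (g*m) = D g * m + g * D m := by
    intro g m hg1 hg2 hm1 hm2
    exact cadj g m (czero m g q p hm2 hg1 hqp0) (czero m (D g) q p hm2 (h11 g hg1 hg2).1 hqp0)
      (czero (D m) g q p (h12 m hm1 hm2).2 hg1 hqp0)
  have cB : ∀ m b : A, p*m = m → m*q = m → q*b = b → b*q = b →
      D (m*b) = D m * b + m * D b := by
    intro m b hm1 hm2 hb1 hb2
    exact cadj m b (czero b m q p hb2 hm1 hqp0) (czero b (D m) q p hb2 (h12 m hm1 hm2).1 hqp0)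
      (czero (D b) m q p (h22 b hb1 hb2).2 hm1 hqp0)
  have cC : ∀ n g : A, q*n = n → n*p = n → p*g = g → g*p = g →
      D (n*g) = D n * g + n * D g := by
    intro n g hn1 hn2 hg1 hg2
    exact cadj n g (czero g n p q hg2 hn1 hpq0) (czero g (D n) p q hg2 (h21 n hn1 hn2).1 hpq0)
      (czero (D g) n p q (h11 g hg1 hg2).2 hn1 hpq0)
  have cD : ∀ b n : A, q*b = b → b*q = b → q*n = n → n*p = n →
      D (b*n) = D b * n + b * D n := by
    intro b n hb1 hb2 hn1 hn2
    exact cadj b n (czero n b p q hn2 hb1 hpq0) (czero n (D b) p q hn2 (h22 b hb1 hb2).1 hpq0)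
      (czero (D n) b p q (h21 n hn1 hn2).2 hb1 hpq0)
  have c11 : ∀ x y : A, p*x = x → x*p = x → p*y = y → y*p = y →
      D (x*y) = D x * y + x * D y := by
    intro x y hx1 hx2 hy1 hy2
    have hxy1 : p*(x*y) = x*y := by rw [← mul_assoc, hx1]
    have hxy2 : (x*y)*p = x*y := by rw [mul_assoc, hy2]
    have hyu1 : p*(y*u) = y*u := by rw [← mul_assoc, hy1]
    have hyu2 : (y*u)*q = y*u := by rw [mul_assoc, huq]
    have eA := cA (x*y) u hxy1 hxy2 hpu huq
    have eB := cA y u hy1 hy2 hpu huq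
    have eC := cA x (y*u) hx1 hx2 hyu1 hyu2
    have eD : D ((x*y)*u) = D (x*(y*u)) := by rw [mul_assoc]
    rw [eA, eC, eB] at eD
    have eE : D (x*y) * u = D x * (y * u) + x * (D y * u) := by
      have h0 : D (x*y) * u + x*(y * D u) = (D x * (y*u) + x * (D y * u)) + x*(y * D u) := by
        rw [← mul_assoc x y (D u)]
        rw [eD, mul_add, ← mul_assoc x y (D u)]; abel
      exact add_right_cancel h0
    have eF := congrArg (fun z => z * v) eE
    simp only [add_mul, mul_assoc, huv] at eF
    rw [hy2, (h11 y hy1 hy2).2] at eF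
    rw [(h11 (x*y) hxy1 hxy2).2] at eF
    exact eF
  have c22 : ∀ x y : A, q*x = x → x*q = x → q*y = y → y*q = y →
      D (x*y) = D x * y + x * D y := by
    intro x y hx1 hx2 hy1 hy2
    have hxy1 : q*(x*y) = x*y := by rw [← mul_assoc, hx1]
    have hxy2 : (x*y)*q = x*y := by rw [mul_assoc, hy2]
    have hyv1 : q*(y*v) = y*v := by rw [← mul_assoc, hy1]
    have hyv2 : (y*v)*p = y*v := by rw [mul_assoc, hvp]
    have eA := cD (x*y) v hxy1 hxy2 hqv hvp
    have eB := cD y v hy1 hy2 hqv hvp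
    have eC := cD x (y*v) hx1 hx2 hyv1 hyv2
    have eD : D ((x*y)*v) = D (x*(y*v)) := by rw [mul_assoc]
    rw [eA, eC, eB] at eD
    have eE : D (x*y) * v = D x * (y * v) + x * (D y * v) := by
      have h0 : D (x*y) * v + x*(y * D v) = (D x * (y*v) + x * (D y * v)) + x*(y * D v) := by
        rw [← mul_assoc x y (D v)]
        rw [eD, mul_add, ← mul_assoc x y (D v)]; abel
      exact add_right_cancel h0
    have eF := congrArg (fun z => z * u) eE
    simp only [add_mul, mul_assoc, hvu] at eF
    rw [hy2, (h22 y hy1 hy2).2] at eF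
    rw [(h22 (x*y) hxy1 hxy2).2] at eF
    exact eF
  have c1221 : ∀ m n : A, p*m = m → m*q = m → q*n = n → n*p = n →
      D (m*n) = D m * n + m * D n ∧ D (n*m) = D n * m + n * D m := by
    intro m n hm1 hm2 hn1 hn2
    have hmn1 : p*(m*n) = m*n := by rw [← mul_assoc, hm1]
    have hmn2 : (m*n)*p = m*n := by rw [mul_assoc, hn2]
    have hnm1 : q*(n*m) = n*m := by rw [← mul_assoc, hn1]
    have hnm2 : (n*m)*q = n*m := by rw [mul_assoc, hm2]
    have h0 := hd1 m n
    rw [hDsub] at h0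
    set G1 : A := D (m*n) - (D m * n + m * D n) with hG1
    set G2 : A := D (n*m) - (n * D m + D n * m) with hG2
    have hG : G1 = G2 := by
      rw [hG1, hG2]
      have h3 : D (m*n) - D (n*m) = (D m * n + m * D n) - (n * D m + D n * m) := by
        rw [h0]; abel
      rw [sub_eq_sub_iff_sub_eq_sub] at h3
      exact h3
    have hpG1 : p*G1 = G1 := by
      rw [hG1, mul_sub, mul_add, ← mul_assoc, ← mul_assoc, (h11 (m*n) hmn1 hmn2).1,
        (h12 m hm1 hm2).1, hm1]
    have hqG2 : q*G2 = G2 := by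
      rw [hG2, mul_sub, mul_add, ← mul_assoc, ← mul_assoc, (h22 (n*m) hnm1 hnm2).1,
        hn1, (h21 n hn1 hn2).1]
    have hzero : G1 = 0 := by
      have h1 : G1 = p*(q*G2) := by rw [hqG2, ← hG, hpG1]
      rw [← mul_assoc, hpq0, zero_mul] at h1
      exact h1
    have hzero2 : G2 = 0 := by rw [← hG]; exact hzero
    constructor
    · have h4 := hzero; rw [hG1, sub_eq_zero] at h4; exact h4
    · have h4 := hzero2; rw [hG2, sub_eq_zero] at h4
      rw [h4]; abel
  have cZ : ∀ x y e f : A, x*e = x → f*y = y → e*f = 0 →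
      (D x)*e = D x → f*(D y) = D y → D (x*y) = D x * y + x * D y := by
    intro x y e f hx hy hef hDx hDy
    rw [czero x y e f hx hy hef, hD0, czero (D x) y e f hDx hy hef,
      czero x (D y) e f hx hDy hef]
    simp
  have hfin : ∀ a b : A, D (a*b) = D a * b + a * D b := by
    have hcor : ∀ (e f : A), e*e = e → f*f = f →
        ∀ z : A, e*(e*(z*f)) = e*(z*f) ∧ (e*(z*f))*f = e*(z*f) := by
      intro e f he hf z
      constructor
      · rw [← mul_assoc, he]
      · rw [mul_assoc, mul_assoc, hf]
    intro a b
    obtain ⟨a1, a2, a3, a4, ha, ha1l, ha1r, ha2l, ha2r, ha3l, ha3r, ha4l, ha4r⟩ :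
        ∃ a1 a2 a3 a4 : A, a = a1+a2+(a3+a4) ∧ p*a1 = a1 ∧ a1*p = a1 ∧ p*a2 = a2 ∧
          a2*q = a2 ∧ q*a3 = a3 ∧ a3*p = a3 ∧ q*a4 = a4 ∧ a4*q = a4 :=
      ⟨p*(a*p), p*(a*q), q*(a*p), q*(a*q), hPeirce a,
        (hcor p p hp hp a).1, (hcor p p hp hp a).2, (hcor p q hp hqq a).1,
        (hcor p q hp hqq a).2, (hcor q p hqq hp a).1, (hcor q p hqq hp a).2,
        (hcor q q hqq hqq a).1, (hcor q q hqq hqq a).2⟩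
    obtain ⟨b1, b2, b3, b4, hb, hb1l, hb1r, hb2l, hb2r, hb3l, hb3r, hb4l, hb4r⟩ :
        ∃ b1 b2 b3 b4 : A, b = b1+b2+(b3+b4) ∧ p*b1 = b1 ∧ b1*p = b1 ∧ p*b2 = b2 ∧
          b2*q = b2 ∧ q*b3 = b3 ∧ b3*p = b3 ∧ q*b4 = b4 ∧ b4*q = b4 :=
      ⟨p*(b*p), p*(b*q), q*(b*p), q*(b*q), hPeirce b,
        (hcor p p hp hp b).1, (hcor p p hp hp b).2, (hcor p q hp hqq b).1,
        (hcor p q hp hqq b).2, (hcor q p hqq hp b).1, (hcor q p hqq hp b).2,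
        (hcor q q hqq hqq b).1, (hcor q q hqq hqq b).2⟩
    have k11 : D (a1*b1) = D a1 * b1 + a1 * D b1 := c11 a1 b1 ha1l ha1r hb1l hb1r
    have k12 : D (a1*b2) = D a1 * b2 + a1 * D b2 := cA a1 b2 ha1l ha1r hb2l hb2r
    have k13 : D (a1*b3) = D a1 * b3 + a1 * D b3 :=
      cZ a1 b3 p q ha1r hb3l hpq0 (h11 a1 ha1l ha1r).2 (h21 b3 hb3l hb3r).1
    have k14 : D (a1*b4) = D a1 * b4 + a1 * D b4 :=
      cZ a1 b4 p q ha1r hb4l hpq0 (h11 a1 ha1l ha1r).2 (h22 b4 hb4l hb4r).1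
    have k21 : D (a2*b1) = D a2 * b1 + a2 * D b1 :=
      cZ a2 b1 q p ha2r hb1l hqp0 (h12 a2 ha2l ha2r).2 (h11 b1 hb1l hb1r).1
    have k22 : D (a2*b2) = D a2 * b2 + a2 * D b2 :=
      cZ a2 b2 q p ha2r hb2l hqp0 (h12 a2 ha2l ha2r).2 (h12 b2 hb2l hb2r).1
    have k23 : D (a2*b3) = D a2 * b3 + a2 * D b3 := (c1221 a2 b3 ha2l ha2r hb3l hb3r).1
    have k24 : D (a2*b4) = D a2 * b4 + a2 * D b4 := cB a2 b4 ha2l ha2r hb4l hb4r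
    have k31 : D (a3*b1) = D a3 * b1 + a3 * D b1 := cC a3 b1 ha3l ha3r hb1l hb1r
    have k32 : D (a3*b2) = D a3 * b2 + a3 * D b2 := (c1221 b2 a3 hb2l hb2r ha3l ha3r).2
    have k33 : D (a3*b3) = D a3 * b3 + a3 * D b3 :=
      cZ a3 b3 p q ha3r hb3l hpq0 (h21 a3 ha3l ha3r).2 (h21 b3 hb3l hb3r).1
    have k34 : D (a3*b4) = D a3 * b4 + a3 * D b4 :=
      cZ a3 b4 p q ha3r hb4l hpq0 (h21 a3 ha3l ha3r).2 (h22 b4 hb4l hb4r).1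
    have k41 : D (a4*b1) = D a4 * b1 + a4 * D b1 :=
      cZ a4 b1 q p ha4r hb1l hqp0 (h22 a4 ha4l ha4r).2 (h11 b1 hb1l hb1r).1
    have k42 : D (a4*b2) = D a4 * b2 + a4 * D b2 :=
      cZ a4 b2 q p ha4r hb2l hqp0 (h22 a4 ha4l ha4r).2 (h12 b2 hb2l hb2r).1
    have k43 : D (a4*b3) = D a4 * b3 + a4 * D b3 := cD a4 b3 ha4l ha4r hb3l hb3r
    have k44 : D (a4*b4) = D a4 * b4 + a4 * D b4 := c22 a4 b4 ha4l ha4r hb4l hb4r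
    rw [ha, hb]
    simp only [mul_add, add_mul, hDadd, k11, k12, k13, k14, k21, k22, k23, k24,
      k31, k32, k33, k34, k41, k42, k43, k44]
    abel
  refine ⟨t, fun a b => ?_⟩
  have h1 := hfin a b
  simp only [hDdef] at h1
  exact h1

private theorem main_inner (F M : Type*) [Field F] [AddCommGroup M] [Module F M]
    (h2F : (2:F) ≠ 0) (φm : M →ₗ[F] F) (m0 : M) (hφm : φm m0 = 1)
    (dW : Module.End F ((ℕ ⊕ ℕ) →₀ M) →ₗ[F] Module.End F ((ℕ ⊕ ℕ) →₀ M))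
    (hdWlie : ∀ a b : Module.End F ((ℕ ⊕ ℕ) →₀ M),
      dW (a*b - b*a) = dW a * b - b * dW a + (a * dW b - dW b * a)) :
    ∃ y : Module.End F ((ℕ ⊕ ℕ) →₀ M), ∀ a, dW a = y * a - a * y := by
  classical
  -- two-torsion-freeness of End W
  have htwo : ∀ x : Module.End F ((ℕ ⊕ ℕ) →₀ M), x + x = 0 → x = 0 := by
    intro x hx
    have hx2 : (2:F) • x = 0 := by rw [two_smul]; exact hx
    have h3 : x = (2:F)⁻¹ • ((2:F) • x) := by
      rw [smul_smul, inv_mul_cancel₀ h2F, one_smul]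
    rw [hx2, smul_zero] at h3
    exact h3
  -- matrix units
  obtain ⟨gl, gr, hl, hr, hlgl, hrgr, hlgr, hrgl, hsum⟩ := units_setup F M
  set p : Module.End F ((ℕ ⊕ ℕ) →₀ M) := gl ∘ₗ hl with hpdef
  set q : Module.End F ((ℕ ⊕ ℕ) →₀ M) := gr ∘ₗ hr with hqdef
  set u : Module.End F ((ℕ ⊕ ℕ) →₀ M) := gl ∘ₗ hr with hudef
  set v : Module.End F ((ℕ ⊕ ℕ) →₀ M) := gr ∘ₗ hl with hvdef
  have hco : ∀ (g1 g2 : (ℕ →₀ M) →ₗ[F] ((ℕ ⊕ ℕ) →₀ M))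
      (h1 h2 : ((ℕ ⊕ ℕ) →₀ M) →ₗ[F] (ℕ →₀ M)),
      ((g1 ∘ₗ h1 : Module.End F ((ℕ ⊕ ℕ) →₀ M)) * (g2 ∘ₗ h2)) = g1 ∘ₗ ((h1 ∘ₗ g2) ∘ₗ h2) := by
    intro g1 g2 h1 h2
    rw [Module.End.mul_eq_comp]
    simp only [LinearMap.comp_assoc]
  have hpq : p + q = 1 := hsum
  have hp : p*p = p := by rw [hpdef, hco, hlgl, LinearMap.id_comp]
  have huv : u*v = p := by rw [hudef, hvdef, hpdef, hco, hrgr, LinearMap.id_comp]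
  have hvu : v*u = q := by rw [hudef, hvdef, hqdef, hco, hlgl, LinearMap.id_comp]
  have hpu : p*u = u := by rw [hudef, hpdef, hco, hlgl, LinearMap.id_comp]
  have huq : u*q = u := by rw [hudef, hqdef, hco, hrgr, LinearMap.id_comp]
  have hqv : q*v = v := by rw [hvdef, hqdef, hco, hrgr, LinearMap.id_comp]
  have hvp : v*p = v := by rw [hvdef, hpdef, hco, hlgl, LinearMap.id_comp]
  have hSCp : ∀ x : Module.End F ((ℕ ⊕ ℕ) →₀ M), p*x = x → x*p = x →
      ∃ b c : Module.End F ((ℕ ⊕ ℕ) →₀ M),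
        p*b = b ∧ b*p = b ∧ p*c = c ∧ c*p = c ∧ x = b*c - c*b := by
    intro x hx1 hx2
    have hx : x = (gl ∘ₗ hl) * x * ((gl ∘ₗ hl) : Module.End F ((ℕ ⊕ ℕ) →₀ M)) := by
      rw [← hpdef, hx1, hx2]
    obtain ⟨b, c, hb1, hb2, hc1, hc2, hbc⟩ := corner_commutator F M _ gl hl hlgl x hx
    exact ⟨b, c, by rw [hpdef]; exact hb1, by rw [hpdef]; exact hb2,
      by rw [hpdef]; exact hc1, by rw [hpdef]; exact hc2, hbc⟩
  have hSCq : ∀ x : Module.End F ((ℕ ⊕ ℕ) →₀ M), q*x = x → x*q = x →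
      ∃ b c : Module.End F ((ℕ ⊕ ℕ) →₀ M),
        q*b = b ∧ b*q = b ∧ q*c = c ∧ c*q = c ∧ x = b*c - c*b := by
    intro x hx1 hx2
    have hx : x = (gr ∘ₗ hr) * x * ((gr ∘ₗ hr) : Module.End F ((ℕ ⊕ ℕ) →₀ M)) := by
      rw [← hqdef, hx1, hx2]
    obtain ⟨b, c, hb1, hb2, hc1, hc2, hbc⟩ := corner_commutator F M _ gr hr hrgr x hx
    exact ⟨b, c, by rw [hqdef]; exact hb1, by rw [hqdef]; exact hb2,
      by rw [hqdef]; exact hc1, by rw [hqdef]; exact hc2, hbc⟩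
  -- main algebraic step
  obtain ⟨t, ht⟩ := lie_to_assoc htwo p q u v hpq hp huv hvu hpu huq hqv hvp hSCp hSCq dW hdWlie
  set DW : Module.End F ((ℕ ⊕ ℕ) →₀ M) →ₗ[F] Module.End F ((ℕ ⊕ ℕ) →₀ M) :=
    dW - (LinearMap.mulLeft F t - LinearMap.mulRight F t) with hDWdef
  have hDWapp : ∀ a, DW a = dW a - (t*a - a*t) := by
    intro a
    simp [hDWdef, LinearMap.sub_apply, LinearMap.mulLeft_apply, LinearMap.mulRight_apply]
  have hDWleib : ∀ a b, DW (a*b) = DW a * b + a * DW b := by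
    intro a b
    rw [hDWapp, hDWapp, hDWapp]
    exact ht a b
  have hφ : ((φm ∘ₗ Finsupp.lapply (Sum.inl 0)) :
      ((ℕ ⊕ ℕ) →₀ M) →ₗ[F] F) (Finsupp.single (Sum.inl 0) m0) = 1 := by
    simp [Finsupp.lapply_apply, hφm]
  obtain ⟨y0, hy0⟩ := deriv_inner F ((ℕ ⊕ ℕ) →₀ M) (Finsupp.single (Sum.inl 0) m0)
    (φm ∘ₗ Finsupp.lapply (Sum.inl 0)) hφ DW hDWleib
  refine ⟨y0 + t, fun a => ?_⟩
  have h1 := hDWapp a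
  rw [hy0 a] at h1
  rw [eq_sub_iff_add_eq] at h1
  have h2 : dW a = y0*a - a*y0 + (t*a - a*t) := h1.symm
  rw [h2]; noncomm_ring

private theorem transport_inner (F V W' : Type*) [Field F] [AddCommGroup V] [Module F V]
    [AddCommGroup W'] [Module F W'] (e : V ≃ₗ[F] W')
    (H : ∀ dW : Module.End F W' →ₗ[F] Module.End F W',
      (∀ a b : Module.End F W',
        dW (a*b - b*a) = dW a * b - b * dW a + (a * dW b - dW b * a)) →
      ∃ y : Module.End F W', ∀ a, dW a = y * a - a * y)
    (d : LieDerivation F (Module.End F V) (Module.End F V)) :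
    ∃ y : Module.End F V, ∀ a : Module.End F V, d a = ⁅y, a⁆ := by
  have hΦmul : ∀ (a b : Module.End F V), e.conj (a*b) = e.conj a * e.conj b := by
    intro a b; ext w
    simp [LinearEquiv.conj_apply_apply, Module.End.mul_apply]
  have hΨmul : ∀ (a b : Module.End F W'),
      e.symm.conj (a*b) = e.symm.conj a * e.symm.conj b := by
    intro a b; ext w
    simp [LinearEquiv.conj_apply_apply, Module.End.mul_apply]
  have hΦΨ : ∀ a : Module.End F W', e.conj (e.symm.conj a) = a := by
    intro a; ext w
    simp [LinearEquiv.conj_apply_apply]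
  have hΨΦ : ∀ a : Module.End F V, e.symm.conj (e.conj a) = a := by
    intro a; ext w
    simp [LinearEquiv.conj_apply_apply]
  set dW : Module.End F W' →ₗ[F] Module.End F W' :=
    e.conj.toLinearMap ∘ₗ d.toLinearMap ∘ₗ e.symm.conj.toLinearMap with hdW
  have hdWapp : ∀ a, dW a = e.conj (d (e.symm.conj a)) := fun _ => rfl
  have hdlie : ∀ x y : Module.End F V,
      d (x*y - y*x) = d x * y - y * d x + (x * d y - d y * x) := by
    intro x y
    have h0 := d.apply_lie_eq_add x y
    rw [Ring.lie_def, Ring.lie_def, Ring.lie_def] at h0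
    exact h0.trans (by abel)
  have hdWlie : ∀ a b : Module.End F W',
      dW (a*b - b*a) = dW a * b - b * dW a + (a * dW b - dW b * a) := by
    intro a b
    rw [hdWapp]
    have h1 : e.symm.conj (a*b - b*a)
        = e.symm.conj a * e.symm.conj b - e.symm.conj b * e.symm.conj a := by
      rw [map_sub, hΨmul, hΨmul]
    rw [h1, hdlie]
    rw [map_add, map_sub, map_sub, hΦmul, hΦmul, hΦmul, hΦmul, hΦΨ, hΦΨ]
    rw [← hdWapp, ← hdWapp]
  obtain ⟨y1, hy1⟩ := H dW hdWlie
  refine ⟨e.symm.conj y1, fun a => ?_⟩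
  have h3 : d a = e.symm.conj (dW (e.conj a)) := by
    rw [hdWapp, hΨΦ, hΨΦ]
  rw [h3, hy1 (e.conj a), map_sub, hΨmul, hΨmul, hΨΦ, Ring.lie_def]

/-- For `char F ≠ 2` and an infinite-dimensional vector space `V` over
`F`, every derivation of the Lie algebra `End_F(V)⁽⁻⁾` (with `⁅f,g⁆ = f∘g - g∘f`) is
inner: it equals `ad(y)` for some `y ∈ End_F(V)`. -/
theorem stmt_11 (F V : Type*) [Field F] [AddCommGroup V] [Module F V]
    (hchar : ringChar F ≠ 2) (hV : ¬ Module.Finite F V)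
    (d : LieDerivation F (Module.End F V) (Module.End F V)) :
    ∃ y : Module.End F V, ∀ a : Module.End F V, d a = ⁅y, a⁆ := by
  classical
  have h2F : (2:F) ≠ 0 := by
    intro h
    have hd2 : ringChar F ∣ 2 := (CharP.cast_eq_zero_iff F (ringChar F) 2).mp h
    rcases (Nat.dvd_prime Nat.prime_two).mp hd2 with h1 | h1
    · exact CharP.char_ne_one F (ringChar F) h1
    · exact hchar h1
  set ι := Module.Basis.ofVectorSpaceIndex F V with hι
  set bV : Module.Basis ι F V := Module.Basis.ofVectorSpace F V with hbV
  have hinf : Infinite ι := by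
    rw [← not_finite_iff_infinite]
    intro hfin
    exact hV (Module.Finite.of_basis bV)
  have hne : Nonempty ι := inferInstance
  obtain ⟨i0⟩ := hne
  have hcard : Nonempty ((ℕ ⊕ ℕ) × ι ≃ ι) := by
    apply Cardinal.eq.1
    rw [Cardinal.mk_prod]
    have h1 : Cardinal.mk (ℕ ⊕ ℕ) = Cardinal.aleph0 := Cardinal.mk_denumerable _
    rw [h1, Cardinal.lift_aleph0, Cardinal.lift_uzero]
    exact Cardinal.mul_eq_right (Cardinal.aleph0_le_mk ι)
      (Cardinal.aleph0_le_mk ι) Cardinal.aleph0_ne_zero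
  obtain ⟨ψ⟩ := hcard
  have e : V ≃ₗ[F] ((ℕ ⊕ ℕ) →₀ (ι →₀ F)) :=
    bV.repr ≪≫ₗ Finsupp.domLCongr ψ.symm ≪≫ₗ Finsupp.finsuppProdLEquiv F
  exact transport_inner F V ((ℕ ⊕ ℕ) →₀ (ι →₀ F)) e
    (fun dW hdW => main_inner F (ι →₀ F) h2F (Finsupp.lapply i0)
      (Finsupp.single i0 (1:F)) (by simp [Finsupp.lapply_apply]) dW hdW) d
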